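/- Decisiveness dichotomy for complementary coalitions: for a social welfare function satisfying Pareto and IIA on at least 3 alternatives, for any coalition D ⊆ N and distinct alternatives a, b, c, if there is a profile where all of D prefer a to c and the social outcome is a ≻ c in the configuration of the group-contraction argument, then either D is decisive or its complement within the ambient decisive set is decisive; formally: if D = D' ∪ D'' is a partition of a decisive set D, then D' is decisive or D'' is decisive. -/

import Mathlib

/-- A strict linear order (complete, transitive, irreflexive preference) on `X`. -/
def SLO (X : Type*) : Type _ := {r : X → X → Prop // IsStrictTotalOrder X r}

/-- Pareto: unanimous strict preference is replicated socially. -/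
def Pareto {X ι : Type*} (f : (ι → SLO X) → SLO X) : Prop :=
  ∀ P : ι → SLO X, ∀ a b : X, (∀ i, (P i).1 a b) → (f P).1 a b

/-- Independence of irrelevant alternatives. -/
def IIA {X ι : Type*} (f : (ι → SLO X) → SLO X) : Prop :=
  ∀ P P' : ι → SLO X, ∀ a b : X,
    (∀ i, (P i).1 a b ↔ (P' i).1 a b) → ((f P).1 a b ↔ (f P').1 a b)

/-- A coalition `D` is `(a,b)`-decisive. -/
def PairDecisive {X ι : Type*} (f : (ι → SLO X) → SLO X) (D : Set ι) (a b : X) : Prop :=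
  ∀ P : ι → SLO X, (∀ i ∈ D, (P i).1 a b) → (f P).1 a b

/-- A coalition is decisive if it is `(a,b)`-decisive for all distinct `a, b`. -/
def Decisive {X ι : Type*} (f : (ι → SLO X) → SLO X) (D : Set ι) : Prop :=
  ∀ a b : X, a ≠ b → PairDecisive f D a b

/-- `d` is a dictator for `f`. -/
def IsDictator {X ι : Type*} (f : (ι → SLO X) → SLO X) (d : ι) : Prop :=
  ∀ P : ι → SLO X, ∀ a b : X, (P d).1 a b → (f P).1 a b

section Aux

variable {X ι : Type*}

/-- Move `y` to the top of the order `r`. -/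
def mvTop (y : X) (r : X → X → Prop) : X → X → Prop :=
  fun a b => b ≠ y ∧ (a = y ∨ r a b)

/-- Move `x` to the bottom of the order `r`. -/
def mvBot (x : X) (r : X → X → Prop) : X → X → Prop :=
  fun a b => a ≠ x ∧ (b = x ∨ r a b)

theorem mvTop_sto {y : X} {r : X → X → Prop} (h : IsStrictTotalOrder X r) :
    IsStrictTotalOrder X (mvTop y r) := by
  refine { trichotomous := ?_, irrefl := ?_, trans := ?_ }
  · intro a b
    suffices H : mvTop y r a b ∨ a = b ∨ mvTop y r b a from
      fun hn1 hn2 => H.elim (absurd · hn1) (·.elim id (absurd · hn2))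
    by_cases ha : a = y
    · by_cases hb : b = y
      · exact Or.inr (Or.inl (ha.trans hb.symm))
      · exact Or.inl ⟨hb, Or.inl ha⟩
    · by_cases hb : b = y
      · exact Or.inr (Or.inr ⟨ha, Or.inl hb⟩)
      · rcases trichotomous_of r a b with h1 | h1 | h1
        · exact Or.inl ⟨hb, Or.inr h1⟩
        · exact Or.inr (Or.inl h1)
        · exact Or.inr (Or.inr ⟨ha, Or.inr h1⟩)
  · intro a ⟨hne, hor⟩
    rcases hor with h1 | h1
    · exact hne h1
    · exact h.irrefl a h1
  · rintro a b c ⟨hb, hab⟩ ⟨hc, hbc⟩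
    refine ⟨hc, ?_⟩
    rcases hab with h1 | h1
    · exact Or.inl h1
    · rcases hbc with h2 | h2
      · exact absurd h2 hb
      · exact Or.inr (h.trans a b c h1 h2)

theorem mvBot_sto {x : X} {r : X → X → Prop} (h : IsStrictTotalOrder X r) :
    IsStrictTotalOrder X (mvBot x r) := by
  refine { trichotomous := ?_, irrefl := ?_, trans := ?_ }
  · intro a b
    suffices H : mvBot x r a b ∨ a = b ∨ mvBot x r b a from
      fun hn1 hn2 => H.elim (absurd · hn1) (·.elim id (absurd · hn2))
    by_cases ha : a = x
    · by_cases hb : b = x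
      · exact Or.inr (Or.inl (ha.trans hb.symm))
      · exact Or.inr (Or.inr ⟨hb, Or.inl ha⟩)
    · by_cases hb : b = x
      · exact Or.inl ⟨ha, Or.inl hb⟩
      · rcases trichotomous_of r a b with h1 | h1 | h1
        · exact Or.inl ⟨ha, Or.inr h1⟩
        · exact Or.inr (Or.inl h1)
        · exact Or.inr (Or.inr ⟨hb, Or.inr h1⟩)
  · intro a ⟨hne, hor⟩
    rcases hor with h1 | h1
    · exact hne h1
    · exact h.irrefl a h1
  · rintro a b c ⟨ha, hab⟩ ⟨hb, hbc⟩
    refine ⟨ha, ?_⟩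
    rcases hbc with h2 | h2
    · rcases hab with h1 | h1
      · exact absurd h1 hb
      · exact Or.inl h2
    · rcases hab with h1 | h1
      · exact absurd h1 hb
      · exact Or.inr (h.trans a b c h1 h2)

/-- Put `y` on top of an existing SLO. -/
def topSLO (y : X) (p : SLO X) : SLO X := ⟨mvTop y p.1, mvTop_sto p.2⟩

/-- Put `x` at the bottom of an existing SLO. -/
def botSLO (x : X) (p : SLO X) : SLO X := ⟨mvBot x p.1, mvBot_sto p.2⟩

theorem SLO.asymm (p : SLO X) {a b : X} (h : p.1 a b) : ¬ p.1 b a :=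
  fun h' => p.2.irrefl a (p.2.trans a b a h h')

/-- Weak decisiveness : `G` forces `x ≻ y` whenever all of `G` prefer `x ≻ y`
and everyone outside `G` prefers `y ≻ x`. -/
def WeakDec (f : (ι → SLO X) → SLO X) (G : Set ι) (x y : X) : Prop :=
  ∀ P : ι → SLO X, (∀ i ∈ G, (P i).1 x y) → (∀ i ∉ G, (P i).1 y x) → (f P).1 x y

theorem weak_from_witness {f : (ι → SLO X) → SLO X} (hI : IIA f) {G : Set ι} {x y : X}
    (P : ι → SLO X) (hG : ∀ i ∈ G, (P i).1 x y) (hnG : ∀ i ∉ G, (P i).1 y x)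
    (hsoc : (f P).1 x y) : WeakDec f G x y := by
  intro Q hQG hQnG
  refine (hI P Q x y ?_).mp hsoc
  intro i
  by_cases hi : i ∈ G
  · simp [hG i hi, hQG i hi]
  · simp [SLO.asymm _ (hnG i hi), SLO.asymm _ (hQnG i hi)]

theorem stepA {f : (ι → SLO X) → SLO X} (hP : Pareto f) (hI : IIA f) {G : Set ι}
    {x y : X} (hxy : x ≠ y) (hW : WeakDec f G x y) {z : X} (hzx : z ≠ x) (hzy : z ≠ y) :
    PairDecisive f G x z := by
  intro Q hQ
  classical
  set P : ι → SLO X :=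
    fun i => if i ∈ G then topSLO x (topSLO y (Q i)) else topSLO y (Q i) with hPdef
  have hxyP : (f P).1 x y := by
    apply hW
    · intro i hi
      simp only [hPdef, if_pos hi]
      exact ⟨Ne.symm hxy, Or.inl rfl⟩
    · intro i hi
      simp only [hPdef, if_neg hi]
      exact ⟨hxy, Or.inl rfl⟩
  have hyzP : (f P).1 y z := by
    apply hP
    intro i
    by_cases hi : i ∈ G
    · simp only [hPdef, if_pos hi]
      exact ⟨hzx, Or.inr ⟨hzy, Or.inl rfl⟩⟩
    · simp only [hPdef, if_neg hi]
      exact ⟨hzy, Or.inl rfl⟩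
  have hxzP : (f P).1 x z := (f P).2.trans x y z hxyP hyzP
  refine (hI P Q x z ?_).mp hxzP
  intro i
  by_cases hi : i ∈ G
  · simp only [hPdef, if_pos hi]
    constructor
    · intro _; exact hQ i hi
    · intro _; exact ⟨hzx, Or.inl rfl⟩
  · simp only [hPdef, if_neg hi]
    simp only [topSLO, mvTop]
    constructor
    · rintro ⟨_, h | h⟩
      · exact absurd h hxy
      · exact h
    · intro h; exact ⟨hzy, Or.inr h⟩

theorem stepB {f : (ι → SLO X) → SLO X} (hP : Pareto f) (hI : IIA f) {G : Set ι}
    {x y : X} (hxy : x ≠ y) (hW : WeakDec f G x y) {z : X} (hzx : z ≠ x) (hzy : z ≠ y) :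
    PairDecisive f G z y := by
  intro Q hQ
  classical
  set P : ι → SLO X :=
    fun i => if i ∈ G then topSLO z (topSLO x (Q i)) else botSLO x (Q i) with hPdef
  have hzxP : (f P).1 z x := by
    apply hP
    intro i
    by_cases hi : i ∈ G
    · simp only [hPdef, if_pos hi]
      exact ⟨Ne.symm hzx, Or.inl rfl⟩
    · simp only [hPdef, if_neg hi]
      exact ⟨hzx, Or.inl rfl⟩
  have hxyP : (f P).1 x y := by
    apply hW
    · intro i hi
      simp only [hPdef, if_pos hi]
      exact ⟨Ne.symm hzy, Or.inr ⟨Ne.symm hxy, Or.inl rfl⟩⟩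
    · intro i hi
      simp only [hPdef, if_neg hi]
      exact ⟨Ne.symm hxy, Or.inl rfl⟩
  have hzyP : (f P).1 z y := (f P).2.trans z x y hzxP hxyP
  refine (hI P Q z y ?_).mp hzyP
  intro i
  by_cases hi : i ∈ G
  · simp only [hPdef, if_pos hi]
    constructor
    · intro _; exact hQ i hi
    · intro _; exact ⟨Ne.symm hzy, Or.inl rfl⟩
  · simp only [hPdef, if_neg hi]
    simp only [botSLO, mvBot]
    constructor
    · rintro ⟨_, h | h⟩
      · exact absurd h (Ne.symm hxy)
      · exact h
    · intro h; exact ⟨hzx, Or.inr h⟩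

theorem exists_third [Fintype X] (hX : 3 ≤ Fintype.card X) (u v : X) :
    ∃ w : X, w ≠ u ∧ w ≠ v := by
  classical
  by_contra h
  push_neg at h
  have hsub : (Finset.univ : Finset X) ⊆ {u, v} := by
    intro w _
    simp only [Finset.mem_insert, Finset.mem_singleton]
    rcases eq_or_ne w u with h1 | h1
    · exact Or.inl h1
    · exact Or.inr (h w h1)
  have hle := Finset.card_le_card hsub
  have h2 : ({u, v} : Finset X).card ≤ 2 := by
    refine (Finset.card_insert_le u {v}).trans ?_
    simp
  rw [Finset.card_univ] at hle
  omega

theorem expand [Fintype X] (hX : 3 ≤ Fintype.card X) {f : (ι → SLO X) → SLO X}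
    (hP : Pareto f) (hI : IIA f) {G : Set ι} {x y : X} (hxy : x ≠ y)
    (hW : WeakDec f G x y) : Decisive f G := by
  have weak_of_pd : ∀ u v : X, PairDecisive f G u v → WeakDec f G u v := by
    intro u v hpd Q hQG _
    exact hpd Q hQG
  have pdxz : ∀ z : X, z ≠ x → z ≠ y → PairDecisive f G x z :=
    fun z hzx hzy => stepA hP hI hxy hW hzx hzy
  have pdzy : ∀ z : X, z ≠ x → z ≠ y → PairDecisive f G z y :=
    fun z hzx hzy => stepB hP hI hxy hW hzx hzy
  obtain ⟨z, hzx, hzy⟩ := exists_third hX x y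
  -- claim 1 : `G` is `(x, v)`-decisive for all `v ≠ x`.
  have claim1 : ∀ v : X, v ≠ x → PairDecisive f G x v := by
    intro v hvx
    by_cases hvy : v = y
    · subst hvy
      exact stepA hP hI (Ne.symm hzx) (weak_of_pd x z (pdxz z hzx hzy)) hvx
        (Ne.symm hzy)
    · exact pdxz v hvx hvy
  -- claim 2 : pairs avoiding `x`.
  have claim2 : ∀ u v : X, u ≠ x → v ≠ x → u ≠ v → PairDecisive f G u v := by
    intro u v hux hvx huv
    exact stepB hP hI hvx.symm (weak_of_pd x v (claim1 v hvx)) hux huv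
  -- claim 3 : `G` is `(u, x)`-decisive for all `u ≠ x`.
  have pdzx : PairDecisive f G z x :=
    stepA hP hI hzy (weak_of_pd z y (pdzy z hzx hzy)) hzx.symm hxy
  have claim3 : ∀ u : X, u ≠ x → PairDecisive f G u x := by
    intro u hux
    by_cases huz : u = z
    · subst huz; exact pdzx
    · exact stepB hP hI hzx (weak_of_pd z x pdzx) huz hux
  intro u v huv
  by_cases hux : u = x
  · subst hux; exact claim1 v (Ne.symm huv)
  · by_cases hvx : v = x
    · subst hvx; exact claim3 u hux
    · exact claim2 u v hux hvx huv

end Aux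

theorem decisiveness_dichotomy {X ι : Type*} [Fintype X] [Finite ι]
    (hX : 3 ≤ Fintype.card X)
    (f : (ι → SLO X) → SLO X) (hP : Pareto f) (hI : IIA f)
    (D D' D'' : Set ι) (hunion : D' ∪ D'' = D) (hdisj : Disjoint D' D'')
    (h1 : D'.Nonempty) (h2 : D''.Nonempty) (hD : Decisive f D) :
    Decisive f D' ∨ Decisive f D'' := by
  classical
  -- get three distinct alternatives
  have hne : Nonempty X := Fintype.card_pos_iff.mp (by omega)
  obtain ⟨a⟩ := hne
  obtain ⟨b, hba, -⟩ := exists_third hX a a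
  obtain ⟨c, hca, hcb⟩ := exists_third hX a b
  -- a base order
  have base : SLO X := ⟨WellOrderingRel, by infer_instance⟩
  -- the three key orders
  set o1 : SLO X := topSLO a (topSLO b (topSLO c base)) with ho1
  set o2 : SLO X := topSLO b (topSLO c (topSLO a base)) with ho2
  set o3 : SLO X := topSLO c (topSLO a (topSLO b base)) with ho3
  have o1ab : o1.1 a b := ⟨hba, Or.inl rfl⟩
  have o1ac : o1.1 a c := ⟨hca, Or.inl rfl⟩
  have o1bc : o1.1 b c := ⟨hca, Or.inr ⟨hcb, Or.inl rfl⟩⟩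
  have o2bc : o2.1 b c := ⟨hcb, Or.inl rfl⟩
  have o2ba : o2.1 b a := ⟨Ne.symm hba, Or.inl rfl⟩
  have o2ca : o2.1 c a := ⟨Ne.symm hba, Or.inr ⟨Ne.symm hca, Or.inl rfl⟩⟩
  have o3ca : o3.1 c a := ⟨Ne.symm hca, Or.inl rfl⟩
  have o3ab : o3.1 a b := ⟨Ne.symm hcb, Or.inr ⟨hba, Or.inl rfl⟩⟩
  set P : ι → SLO X := fun i => if i ∈ D' then o1 else if i ∈ D'' then o2 else o3 with hPdef
  -- society ranks b above c (D is decisive and all of D prefers b to c)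
  have hsbc : (f P).1 b c := by
    apply hD b c (Ne.symm hcb) P
    intro i hi
    rw [← hunion] at hi
    rcases hi with hi | hi
    · simp only [hPdef, if_pos hi]; exact o1bc
    · by_cases hi' : i ∈ D'
      · simp only [hPdef, if_pos hi']; exact o1bc
      · simp only [hPdef, if_neg hi', if_pos hi]; exact o2bc
  rcases (haveI := (f P).2; trichotomous_of (f P).1 a c) with hac | hac | hac
  · -- society: a ≻ c, so D' is weakly decisive for (a, c)
    left
    refine expand hX hP hI hca.symm (weak_from_witness hI P ?_ ?_ hac)
    · intro i hi
      simp only [hPdef, if_pos hi]; exact o1ac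
    · intro i hi
      by_cases hi' : i ∈ D''
      · simp only [hPdef, if_neg hi, if_pos hi']; exact o2ca
      · simp only [hPdef, if_neg hi, if_neg hi']; exact o3ca
  · exact absurd hac hca.symm
  · -- society: c ≻ a; with b ≻ c we get b ≻ a, so D'' is weakly decisive for (b, a)
    right
    have hba' : (f P).1 b a := (f P).2.trans b c a hsbc hac
    refine expand hX hP hI hba (weak_from_witness hI P ?_ ?_ hba')
    · intro i hi
      have hi' : i ∉ D' := fun h => (hdisj.le_bot ⟨h, hi⟩ : i ∈ (⊥ : Set ι)).elim
      simp only [hPdef, if_neg hi', if_pos hi]; exact o2ba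
    · intro i hi
      by_cases hi' : i ∈ D'
      · simp only [hPdef, if_pos hi']; exact o1ab
      · simp only [hPdef, if_neg hi', if_neg hi]; exact o3ab
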